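/- (Quantitative second-moment bound underlying Proposition 2.) Under the noisy network model, let 𝒱 be a subgraph index set with parameters k ≥ 2 and τ₁,…,τ_k ∈ {0,1}, let T̃_𝒱 = |𝒱|^{-1} Σ_{v∈𝒱} Π_{ℓ=1}^k φ_ℓ(Y_{i_ℓ,i_ℓ′}) and T_𝒱 = |𝒱|^{-1} Σ_{v∈𝒱} Π_{ℓ=1}^k E{φ_ℓ(Y_{i_ℓ,i_ℓ′})}, where φ_ℓ(x) = (x−α)^{τ_ℓ}(1−β−x)^{1−τ_ℓ}. Then E{|T̃_𝒱 − T_𝒱|²} ≤ 2^k · k! · q_max^{2k} · (2^k − 1)² · ℵ_𝒱 / |𝒱|, where q_max = max{α, 1−α, β, 1−β} and ℵ_𝒱 is defined below. -/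

import Mathlib

open MeasureTheory ProbabilityTheory Finset

/-- Index set of unordered vertex pairs, encoded as ordered pairs `(i, j)` with `i < j`. -/
abbrev EdgeIdx (p : ℕ) := {q : Fin p × Fin p // q.1 < q.2}

/-- The number of tuples in `𝒢_S(v)`: replacements of the coordinates of `v` in
positions `S` that keep the tuple inside `V`; equivalently, the number of tuples of
`V` that agree with `v` outside `S`. -/
def replCard {p k : ℕ} (V : Finset (Fin k → Fin p × Fin p))
    (v : Fin k → Fin p × Fin p) (S : Finset (Fin k)) : ℕ :=
  (V.filter (fun v' => ∀ ℓ ∉ S, v' ℓ = v ℓ)).card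

/-- `ℵ_𝒱(s)`: the maximum over `v ∈ V` and over sets `S` of `s` positions of the number
of admissible replacements of the coordinates of `v` in the positions `S`. -/
def alephS {p k : ℕ} (V : Finset (Fin k → Fin p × Fin p)) (s : ℕ) : ℕ :=
  V.sup fun v =>
    ((univ : Finset (Finset (Fin k))).filter (fun S => S.card = s)).sup (replCard V v)

/-- `ℵ_𝒱 = max_{1 ≤ s ≤ k−1} ℵ_𝒱(s)`. -/
def aleph {p k : ℕ} (V : Finset (Fin k → Fin p × Fin p)) : ℕ :=
  (Finset.Icc 1 (k - 1)).sup (alephS V)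

section Aux


private lemma integrable_of_abs_bound {Ω : Type*} [MeasurableSpace Ω] {μ : Measure Ω}
    [IsFiniteMeasure μ] {f : Ω → ℝ} (hf : Measurable f) {C : ℝ}
    (hb : ∀ ω, |f ω| ≤ C) : Integrable f μ :=
  (integrable_const C).mono' hf.aestronglyMeasurable
    (Filter.Eventually.of_forall fun ω => by simpa [Real.norm_eq_abs] using hb ω)

private lemma indep_prod_prod {ι Ω : Type*} [MeasurableSpace Ω] {μ : Measure Ω}
    {G : ι → Ω → ℝ}
    (hindep : iIndepFun G μ)
    (hG : ∀ i, Measurable (G i))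
    {κ₁ κ₂ : Type*} (s₁ : Finset κ₁) (s₂ : Finset κ₂) (e₁ : κ₁ → ι) (e₂ : κ₂ → ι)
    (f₁ : κ₁ → ℝ → ℝ) (f₂ : κ₂ → ℝ → ℝ)
    (hf₁ : ∀ a, Measurable (f₁ a)) (hf₂ : ∀ a, Measurable (f₂ a))
    (hd : ∀ a ∈ s₁, ∀ b ∈ s₂, e₁ a ≠ e₂ b) :
    IndepFun (fun ω => ∏ a ∈ s₁, f₁ a (G (e₁ a) ω))
      (fun ω => ∏ b ∈ s₂, f₂ b (G (e₂ b) ω)) μ := by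
  classical
  have hST : Disjoint (s₁.image e₁) (s₂.image e₂) := by
    rw [Finset.disjoint_left]
    rintro x hx hx'
    rw [Finset.mem_image] at hx hx'
    obtain ⟨a, ha, rfl⟩ := hx
    obtain ⟨b, hb, hab⟩ := hx'
    exact hd a ha b hb hab.symm
  have base := hindep.indepFun_finset (s₁.image e₁) (s₂.image e₂) hST hG
  set F₁ : (↥(s₁.image e₁) → ℝ) → ℝ :=
    fun g => ∏ a ∈ s₁.attach, f₁ a.1 (g ⟨e₁ a.1, Finset.mem_image_of_mem e₁ a.2⟩) with hF₁
  set F₂ : (↥(s₂.image e₂) → ℝ) → ℝ :=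
    fun g => ∏ b ∈ s₂.attach, f₂ b.1 (g ⟨e₂ b.1, Finset.mem_image_of_mem e₂ b.2⟩) with hF₂
  have hmeas₁ : Measurable F₁ :=
    Finset.measurable_prod _ fun a _ => (hf₁ a.1).comp (measurable_pi_apply _)
  have hmeas₂ : Measurable F₂ :=
    Finset.measurable_prod _ fun b _ => (hf₂ b.1).comp (measurable_pi_apply _)
  have key := base.comp hmeas₁ hmeas₂
  have e1 : (fun ω => ∏ a ∈ s₁, f₁ a (G (e₁ a) ω))
      = F₁ ∘ (fun ω (i : ↥(s₁.image e₁)) => G i ω) := by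
    funext ω
    exact (Finset.prod_attach s₁ fun a => f₁ a (G (e₁ a) ω)).symm
  have e2 : (fun ω => ∏ b ∈ s₂, f₂ b (G (e₂ b) ω))
      = F₂ ∘ (fun ω (i : ↥(s₂.image e₂)) => G i ω) := by
    funext ω
    exact (Finset.prod_attach s₂ fun b => f₂ b (G (e₂ b) ω)).symm
  rw [e1, e2]
  exact key

private lemma integral_comp_prod_eq_prod {ι Ω : Type*} [MeasurableSpace Ω] {μ : Measure Ω}
    [IsProbabilityMeasure μ] {G : ι → Ω → ℝ}
    (hindep : iIndepFun G μ)
    (hG : ∀ i, Measurable (G i))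
    {κ : Type*} (e : κ → ι) (f : κ → ℝ → ℝ) (hf : ∀ a, Measurable (f a))
    (C : ℝ) (hC : 0 ≤ C) (hb : ∀ a ω, |f a (G (e a) ω)| ≤ C)
    (s : Finset κ) (hinj : Set.InjOn e s) :
    ∫ ω, ∏ a ∈ s, f a (G (e a) ω) ∂μ = ∏ a ∈ s, ∫ ω, f a (G (e a) ω) ∂μ := by
  classical
  revert hinj
  induction s using Finset.induction_on with
  | empty => intro _; simp
  | @insert a s' ha ih =>
    intro hinj
    have hinj' : Set.InjOn e s' := hinj.mono (by exact_mod_cast Finset.subset_insert a s')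
    have hfac_int : ∀ b : κ, Integrable (fun ω => f b (G (e b) ω)) μ := fun b =>
      integrable_of_abs_bound ((hf b).comp (hG (e b))) (hb b)
    have hprod_meas : Measurable fun ω => ∏ b ∈ s', f b (G (e b) ω) :=
      Finset.measurable_prod _ fun b _ => (hf b).comp (hG (e b))
    have hprod_b : ∀ ω, |∏ b ∈ s', f b (G (e b) ω)| ≤ C ^ s'.card := fun ω => by
      rw [Finset.abs_prod]
      calc ∏ b ∈ s', |f b (G (e b) ω)| ≤ ∏ _b ∈ s', C :=
            Finset.prod_le_prod (fun b _ => abs_nonneg _) (fun b _ => hb b ω)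
        _ = C ^ s'.card := Finset.prod_const C
    have hprod_int : Integrable (fun ω => ∏ b ∈ s', f b (G (e b) ω)) μ :=
      integrable_of_abs_bound hprod_meas hprod_b
    have hdisj : ∀ x ∈ ({a} : Finset κ), ∀ b ∈ s', e x ≠ e b := by
      intro x hx b hb' hEq
      rw [Finset.mem_singleton] at hx
      subst hx
      have hxb : x = b := hinj (by simp) (by simp [hb']) hEq
      exact ha (hxb ▸ hb')
    have hIndep := indep_prod_prod hindep hG ({a} : Finset κ) s' e e f f hf hf hdisj
    simp only [Finset.prod_singleton] at hIndep
    simp only [Finset.prod_insert ha]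
    have hmul : ∫ ω, (f a (G (e a) ω) * ∏ b ∈ s', f b (G (e b) ω)) ∂μ
        = (∫ ω, f a (G (e a) ω) ∂μ) * ∫ ω, ∏ b ∈ s', f b (G (e b) ω) ∂μ :=
      hIndep.integral_fun_mul_eq_mul_integral (hfac_int a).aestronglyMeasurable
        hprod_int.aestronglyMeasurable
    rw [hmul, ih hinj']

private lemma nat_add_two_le_two_pow : ∀ k : ℕ, 2 ≤ k → k + 2 ≤ 2 ^ k := by
  intro k hk
  induction k, hk using Nat.le_induction with
  | base => norm_num
  | succ n hn ih =>
    have h2 : 2 ^ (n + 1) = 2 ^ n + 2 ^ n := by rw [pow_succ]; ring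
    omega

end Aux

set_option maxHeartbeats 2000000 in
/-- Quantitative second-moment bound underlying Proposition 2: with
`T̃_𝒱 = |𝒱|⁻¹ ∑_{v∈𝒱} ∏_ℓ φ_ℓ(Y_{i_ℓ,i_ℓ'})` and
`T_𝒱 = |𝒱|⁻¹ ∑_{v∈𝒱} ∏_ℓ E{φ_ℓ(Y_{i_ℓ,i_ℓ'})}`, where
`φ_ℓ(x) = (x−α)^{τ_ℓ}(1−β−x)^{1−τ_ℓ}`, one has
`E{|T̃_𝒱 − T_𝒱|²} ≤ 2^k k! q_max^{2k} (2^k−1)² ℵ_𝒱 / |𝒱|`,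
where `q_max = max{α, 1−α, β, 1−β}`. -/
theorem second_moment_bound_subgraph_estimator
    {Ω : Type*} [MeasurableSpace Ω] (μ : Measure Ω) [IsProbabilityMeasure μ]
    (p : ℕ) (hp : 2 ≤ p)
    (A : Fin p → Fin p → ℝ)
    (hA01 : ∀ i j, A i j = 0 ∨ A i j = 1)
    (hAsym : ∀ i j, A i j = A j i) (hAdiag : ∀ i, A i i = 0)
    (α β : ℝ) (hα0 : 0 ≤ α) (hα1 : α ≤ 1) (hβ0 : 0 ≤ β) (hβ1 : β ≤ 1)
    (hαβ : α + β ≤ 1)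
    (Y : Fin p → Fin p → Ω → ℝ)
    (hYmeas : ∀ i j, Measurable (Y i j))
    (hY01 : ∀ i j ω, Y i j ω = 0 ∨ Y i j ω = 1)
    (hYsym : ∀ i j ω, Y i j ω = Y j i ω)
    (hYdist : ∀ i j : Fin p, i ≠ j →
      μ {ω | Y i j ω = 1} = ENNReal.ofReal (if A i j = 1 then 1 - β else α))
    -- the observed edge indicators are independent across unordered vertex pairs
    (hindep : iIndepFun
      (fun (e : EdgeIdx p) ω => Y e.1.1 e.1.2 ω) μ)
    (k : ℕ) (hk : 2 ≤ k)
    (V : Finset (Fin k → Fin p × Fin p)) (hVne : V.Nonempty)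
    (hV : ∀ v ∈ V, (∀ ℓ, (v ℓ).1 ≠ (v ℓ).2) ∧
      ∀ ℓ₁ ℓ₂, ℓ₁ ≠ ℓ₂ →
        (({(v ℓ₁).1, (v ℓ₁).2} ∩ {(v ℓ₂).1, (v ℓ₂).2} : Finset (Fin p)).card ≤ 1))
    (τ : Fin k → ℕ) (hτ : ∀ ℓ, τ ℓ = 0 ∨ τ ℓ = 1)
    (qmax : ℝ) (hqmax : qmax = max (max α (1 - α)) (max β (1 - β)))
    (T : ℝ)
    (hT : T = (V.card : ℝ)⁻¹ * ∑ v ∈ V, ∏ ℓ,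
      ∫ ω, (Y (v ℓ).1 (v ℓ).2 ω - α) ^ τ ℓ *
        (1 - β - Y (v ℓ).1 (v ℓ).2 ω) ^ (1 - τ ℓ) ∂μ) :
    ∫ ω, ((V.card : ℝ)⁻¹ * (∑ v ∈ V, ∏ ℓ,
          (Y (v ℓ).1 (v ℓ).2 ω - α) ^ τ ℓ *
            (1 - β - Y (v ℓ).1 (v ℓ).2 ω) ^ (1 - τ ℓ)) - T) ^ 2 ∂μ
      ≤ 2 ^ k * (Nat.factorial k : ℝ) * qmax ^ (2 * k) * ((2 : ℝ) ^ k - 1) ^ 2 *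
          (aleph V : ℝ) / (V.card : ℝ) := by
  have hp1 : 1 < p := lt_of_lt_of_le one_lt_two hp
  -- abbreviations
  set G : EdgeIdx p → Ω → ℝ := fun e ω => Y e.1.1 e.1.2 ω with hG
  set φ : Fin k → ℝ → ℝ := fun ℓ x => (x - α) ^ τ ℓ * (1 - β - x) ^ (1 - τ ℓ) with hφ
  set X : (Fin k → Fin p × Fin p) → Ω → ℝ :=
    fun v ω => ∏ ℓ, φ ℓ (Y (v ℓ).1 (v ℓ).2 ω) with hX
  set m : (Fin k → Fin p × Fin p) → ℝ :=
    fun v => ∏ ℓ, ∫ ω, φ ℓ (Y (v ℓ).1 (v ℓ).2 ω) ∂μ with hm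
  set Z : (Fin k → Fin p × Fin p) → Ω → ℝ := fun v ω => X v ω - m v with hZ
  set ed : (Fin k → Fin p × Fin p) → Fin k → EdgeIdx p := fun v ℓ =>
    if h : (v ℓ).1 < (v ℓ).2 then ⟨v ℓ, h⟩
    else if h2 : (v ℓ).2 < (v ℓ).1 then ⟨((v ℓ).2, (v ℓ).1), h2⟩
    else ⟨(⟨0, by omega⟩, ⟨1, by omega⟩), Fin.mk_lt_mk.mpr Nat.zero_lt_one⟩ with hed
  -- bounds on qmax
  have hqa : α ≤ qmax := by rw [hqmax]; exact le_trans (le_max_left _ _) (le_max_left _ _)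
  have hqa' : 1 - α ≤ qmax := by rw [hqmax]; exact le_trans (le_max_right _ _) (le_max_left _ _)
  have hqb : β ≤ qmax := by rw [hqmax]; exact le_trans (le_max_left _ _) (le_max_right _ _)
  have hqb' : 1 - β ≤ qmax := by rw [hqmax]; exact le_trans (le_max_right _ _) (le_max_right _ _)
  have hq0 : 0 ≤ qmax := le_trans (by linarith) hqb'
  -- φ facts
  have hφmeas : ∀ ℓ, Measurable (φ ℓ) := by
    intro ℓ
    rw [hφ]
    exact ((measurable_id.sub_const α).pow_const _).mul
      ((measurable_const.sub measurable_id).pow_const _)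
  have hφb : ∀ (ℓ : Fin k) (i j : Fin p) ω, |φ ℓ (Y i j ω)| ≤ qmax := by
    intro ℓ i j ω
    rcases hτ ℓ with h | h <;> rcases hY01 i j ω with h0 | h0 <;>
      simp only [hφ, h, h0, pow_zero, pow_one, one_mul, mul_one, sub_zero, zero_sub,
        Nat.sub_self, Nat.sub_zero] <;>
      (rw [abs_le]; constructor <;> linarith)
  -- edge facts
  have hedY : ∀ v ∈ V, ∀ (ℓ : Fin k) ω, G (ed v ℓ) ω = Y (v ℓ).1 (v ℓ).2 ω := by
    intro v hv ℓ ω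
    rcases lt_or_gt_of_ne ((hV v hv).1 ℓ) with h | h
    · simp only [hG, hed]
      rw [dif_pos h]
    · simp only [hG, hed]
      rw [dif_neg (lt_asymm h), dif_pos h]
      exact hYsym _ _ _
  have hedPair : ∀ v ∈ V, ∀ ℓ : Fin k,
      ({(ed v ℓ).1.1, (ed v ℓ).1.2} : Finset (Fin p)) = {(v ℓ).1, (v ℓ).2} := by
    intro v hv ℓ
    rcases lt_or_gt_of_ne ((hV v hv).1 ℓ) with h | h
    · simp only [hed]; rw [dif_pos h]
    · simp only [hed]; rw [dif_neg (lt_asymm h), dif_pos h]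
      exact Finset.pair_comm _ _
  have hedInj : ∀ v ∈ V, Function.Injective (ed v) := by
    intro v hv ℓ₁ ℓ₂ heq
    by_contra hne
    have h2 := (hV v hv).2 ℓ₁ ℓ₂ hne
    have hset : ({(v ℓ₁).1, (v ℓ₁).2} : Finset (Fin p)) = {(v ℓ₂).1, (v ℓ₂).2} := by
      rw [← hedPair v hv ℓ₁, ← hedPair v hv ℓ₂, heq]
    rw [hset, Finset.inter_self] at h2
    have hcard : ({(v ℓ₂).1, (v ℓ₂).2} : Finset (Fin p)).card = 2 :=
      Finset.card_pair ((hV v hv).1 ℓ₂)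
    omega
  have hedBack : ∀ v ∈ V, ∀ v' ∈ V, ∀ (ℓ ℓ' : Fin k), ed v' ℓ' = ed v ℓ →
      v' ℓ' = v ℓ ∨ v' ℓ' = ((v ℓ).2, (v ℓ).1) := by
    intro v hv v' hv' ℓ ℓ' heq
    have hval : (ed v' ℓ').1 = (ed v ℓ).1 := congrArg Subtype.val heq
    rcases lt_or_gt_of_ne ((hV v' hv').1 ℓ') with h1 | h1 <;>
      rcases lt_or_gt_of_ne ((hV v hv).1 ℓ) with h2 | h2
    · left
      simpa only [hed, dif_pos h1, dif_pos h2] using hval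
    · right
      simpa only [hed, dif_pos h1, dif_neg (lt_asymm h2), dif_pos h2] using hval
    · right
      have h3 : ((v' ℓ').2, (v' ℓ').1) = v ℓ := by
        simpa only [hed, dif_neg (lt_asymm h1), dif_pos h1, dif_pos h2] using hval
      rw [← h3]
    · left
      have h3 : ((v' ℓ').2, (v' ℓ').1) = ((v ℓ).2, (v ℓ).1) := by
        simpa only [hed, dif_neg (lt_asymm h1), dif_pos h1, dif_neg (lt_asymm h2),
          dif_pos h2] using hval
      have ha := congrArg Prod.fst h3
      have hb := congrArg Prod.snd h3
      exact Prod.ext hb ha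
  -- measurability / integrability
  have hGmeas : ∀ e : EdgeIdx p, Measurable (G e) := fun e => hYmeas _ _
  have hXmeas : ∀ v, Measurable (X v) := by
    intro v
    rw [hX]
    exact Finset.measurable_prod _ fun ℓ _ => (hφmeas ℓ).comp (hYmeas _ _)
  have hXb : ∀ v ω, |X v ω| ≤ qmax ^ k := by
    intro v ω
    rw [hX]
    calc |∏ ℓ, φ ℓ (Y (v ℓ).1 (v ℓ).2 ω)| = ∏ ℓ, |φ ℓ (Y (v ℓ).1 (v ℓ).2 ω)| :=
          Finset.abs_prod _ _
      _ ≤ ∏ _ℓ : Fin k, qmax :=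
          Finset.prod_le_prod (fun _ _ => abs_nonneg _) (fun ℓ _ => hφb ℓ _ _ ω)
      _ = qmax ^ k := by simp [Finset.prod_const, Finset.card_univ]
  have hXint : ∀ v, Integrable (X v) μ := fun v =>
    integrable_of_abs_bound (hXmeas v) (hXb v)
  have hmb : ∀ v, |m v| ≤ qmax ^ k := by
    intro v
    rw [hm]
    calc |∏ ℓ, ∫ ω, φ ℓ (Y (v ℓ).1 (v ℓ).2 ω) ∂μ|
        = ∏ ℓ, |∫ ω, φ ℓ (Y (v ℓ).1 (v ℓ).2 ω) ∂μ| := Finset.abs_prod _ _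
      _ ≤ ∏ _ℓ : Fin k, qmax := by
          refine Finset.prod_le_prod (fun _ _ => abs_nonneg _) (fun ℓ _ => ?_)
          have := norm_integral_le_of_norm_le_const
            (C := qmax) (μ := μ) (f := fun ω => φ ℓ (Y (v ℓ).1 (v ℓ).2 ω))
            (Filter.Eventually.of_forall fun ω => by
              rw [Real.norm_eq_abs]; exact hφb ℓ _ _ ω)
          simpa [Real.norm_eq_abs, measure_univ] using this
      _ = qmax ^ k := by simp [Finset.prod_const, Finset.card_univ]
  have hZmeas : ∀ v, Measurable (Z v) := by
    intro v
    rw [hZ]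
    exact (hXmeas v).sub measurable_const
  have hZb : ∀ v ω, |Z v ω| ≤ 2 * qmax ^ k := by
    intro v ω
    rw [hZ]
    have h1 := hXb v ω
    have h2 := hmb v
    have h3 : |X v ω - m v| ≤ |X v ω| + |m v| := abs_sub _ _
    linarith
  have hZZb0 : ∀ v v' ω, |Z v ω * Z v' ω| ≤ (2 * qmax ^ k) * (2 * qmax ^ k) := by
    intro v v' ω
    rw [abs_mul]
    exact mul_le_mul (hZb v ω) (hZb v' ω) (abs_nonneg _)
      (by positivity)
  have hZZint : ∀ v v', Integrable (fun ω => Z v ω * Z v' ω) μ := fun v v' =>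
    integrable_of_abs_bound ((hZmeas v).mul (hZmeas v')) (hZZb0 v v')
  have hZZb : ∀ v v', ∫ ω, Z v ω * Z v' ω ∂μ ≤ 4 * (qmax ^ k * qmax ^ k) := by
    intro v v'
    have h := norm_integral_le_of_norm_le_const
      (C := (2 * qmax ^ k) * (2 * qmax ^ k)) (μ := μ)
      (f := fun ω => Z v ω * Z v' ω)
      (Filter.Eventually.of_forall fun ω => by
        rw [Real.norm_eq_abs]; exact hZZb0 v v' ω)
    rw [Real.norm_eq_abs, probReal_univ] at h
    simp only [ENNReal.toReal_one, mul_one] at h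
    have h2 := le_abs_self (∫ ω, Z v ω * Z v' ω ∂μ)
    nlinarith [pow_nonneg hq0 k]
  -- expectation of X equals product of expectations
  have hXG : ∀ v ∈ V, X v = fun ω => ∏ ℓ, φ ℓ (G (ed v ℓ) ω) := by
    intro v hv
    funext ω
    rw [hX]
    exact Finset.prod_congr rfl fun ℓ _ => by rw [hedY v hv ℓ ω]
  have hmeq : ∀ v ∈ V, ∫ ω, X v ω ∂μ = m v := by
    intro v hv
    rw [hXG v hv]
    rw [integral_comp_prod_eq_prod hindep hGmeas (ed v) φ hφmeas qmax hq0
      (fun a ω => by rw [hedY v hv a ω]; exact hφb a _ _ ω)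
      Finset.univ ((hedInj v hv).injOn)]
    rw [hm]
    exact Finset.prod_congr rfl fun ℓ _ => by
      congr 1
      funext ω
      rw [hedY v hv ℓ ω]
  -- covariance vanishes for edge-disjoint tuples
  have hcov0 : ∀ v ∈ V, ∀ v' ∈ V, (∀ ℓ' ℓ : Fin k, ed v' ℓ' ≠ ed v ℓ) →
      ∫ ω, Z v ω * Z v' ω ∂μ = 0 := by
    intro v hv v' hv' hdisj
    have hIndep : IndepFun (X v) (X v') μ := by
      rw [hXG v hv, hXG v' hv']
      exact indep_prod_prod hindep hGmeas Finset.univ Finset.univ (ed v) (ed v') φ φ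
        hφmeas hφmeas (fun a _ b _ => (hdisj b a).symm)
    have hXXint : Integrable (fun ω => X v ω * X v' ω) μ :=
      integrable_of_abs_bound ((hXmeas v).mul (hXmeas v'))
        (C := qmax ^ k * qmax ^ k) (fun ω => by
          rw [abs_mul]
          exact mul_le_mul (hXb v ω) (hXb v' ω) (abs_nonneg _) (pow_nonneg hq0 k))
    have hmul : ∫ ω, X v ω * X v' ω ∂μ = m v * m v' := by
      have := hIndep.integral_fun_mul_eq_mul_integral (hXint v).aestronglyMeasurable
        (hXint v').aestronglyMeasurable
      rw [hmeq v hv, hmeq v' hv'] at this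
      exact this
    have hexp : (fun ω => Z v ω * Z v' ω)
        = fun ω => (X v ω * X v' ω - m v' * X v ω) - (m v * X v' ω - m v * m v') := by
      funext ω
      rw [hZ]
      ring
    have I2 : Integrable (fun ω => m v' * X v ω) μ := (hXint v).const_mul (m v')
    have I3 : Integrable (fun ω => m v * X v' ω) μ := (hXint v').const_mul (m v)
    have I4 : Integrable (fun _ω : Ω => m v * m v') μ := integrable_const _
    have I5 : Integrable (fun ω => X v ω * X v' ω - m v' * X v ω) μ := hXXint.sub I2
    have I6 : Integrable (fun ω => m v * X v' ω - m v * m v') μ := I3.sub I4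
    rw [hexp, integral_sub I5 I6, integral_sub hXXint I2, integral_sub I3 I4,
      integral_const_mul, integral_const_mul, integral_const, hmul,
      hmeq v hv, hmeq v' hv']
    simp only [measure_univ, probReal_univ, ENNReal.toReal_one, smul_eq_mul, one_mul, mul_one]
    ring
  -- counting
  have hfix : ∀ (j : Fin k) (c : Fin p × Fin p),
      (V.filter fun v' => v' j = c).card ≤ aleph V := by
    intro j c
    rcases (V.filter fun v' => v' j = c).eq_empty_or_nonempty with he | ⟨w₀, hw₀⟩
    · simp [he]
    · rw [Finset.mem_filter] at hw₀
      have hEqSet : (V.filter fun v' => v' j = c).card = replCard V w₀ ({j}ᶜ) := by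
        unfold replCard
        refine congrArg Finset.card (Finset.filter_congr ?_)
        intro v' _
        constructor
        · intro h ℓ hℓ
          have hℓj : ℓ = j := by simpa using hℓ
          subst hℓj
          rw [h, hw₀.2]
        · intro h
          have := h j (by simp)
          rw [this, hw₀.2]
      have h1 : replCard V w₀ ({j}ᶜ) ≤ alephS V (k - 1) := by
        have hcard : ({j}ᶜ : Finset (Fin k)).card = k - 1 := by
          simp [Finset.card_compl]
        have hstep : replCard V w₀ ({j}ᶜ)
            ≤ ((univ : Finset (Finset (Fin k))).filter
                (fun S => S.card = k - 1)).sup (replCard V w₀) :=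
          Finset.le_sup (by simp [hcard])
        unfold alephS
        exact le_trans hstep (Finset.le_sup
          (f := fun v => ((univ : Finset (Finset (Fin k))).filter
            (fun S => S.card = k - 1)).sup (replCard V v)) hw₀.1)
      have h2 : alephS V (k - 1) ≤ aleph V := by
        have hmem : k - 1 ∈ Finset.Icc 1 (k - 1) :=
          Finset.mem_Icc.mpr ⟨Nat.le_sub_one_of_lt (lt_of_lt_of_le one_lt_two hk), le_rfl⟩
        unfold aleph
        exact Finset.le_sup (f := alephS V) hmem
      rw [hEqSet]
      exact le_trans h1 h2
  have hNcount : ∀ v ∈ V,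
      (V.filter fun v' => ∃ ℓ' ℓ : Fin k, ed v' ℓ' = ed v ℓ).card
        ≤ 2 * k ^ 2 * aleph V := by
    intro v hv
    have hsub : (V.filter fun v' => ∃ ℓ' ℓ : Fin k, ed v' ℓ' = ed v ℓ) ⊆
        (Finset.univ : Finset (Fin k × Fin k)).biUnion (fun q =>
          V.filter fun v' => v' q.1 = v q.2 ∨ v' q.1 = ((v q.2).2, (v q.2).1)) := by
      intro v' hv'
      rw [Finset.mem_filter] at hv'
      obtain ⟨hv'V, ℓ', ℓ, heq⟩ := hv'
      refine Finset.mem_biUnion.mpr ⟨(ℓ', ℓ), Finset.mem_univ _, ?_⟩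
      exact Finset.mem_filter.mpr ⟨hv'V, hedBack v hv v' hv'V ℓ ℓ' heq⟩
    refine le_trans (Finset.card_le_card hsub) (le_trans Finset.card_biUnion_le ?_)
    have hq : ∀ q : Fin k × Fin k,
        (V.filter fun v' => v' q.1 = v q.2 ∨ v' q.1 = ((v q.2).2, (v q.2).1)).card
          ≤ 2 * aleph V := by
      intro q
      rw [Finset.filter_or]
      calc _ ≤ (V.filter fun v' => v' q.1 = v q.2).card
            + (V.filter fun v' => v' q.1 = ((v q.2).2, (v q.2).1)).card :=
            Finset.card_union_le _ _
        _ ≤ aleph V + aleph V := add_le_add (hfix _ _) (hfix _ _)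
        _ = 2 * aleph V := (two_mul _).symm
    calc ∑ q : Fin k × Fin k,
          (V.filter fun v' => v' q.1 = v q.2 ∨ v' q.1 = ((v q.2).2, (v q.2).1)).card
        ≤ ∑ _q : Fin k × Fin k, 2 * aleph V := Finset.sum_le_sum fun q _ => hq q
      _ = (k * k) * (2 * aleph V) := by
          rw [Finset.sum_const, smul_eq_mul, Finset.card_univ, Fintype.card_prod,
            Fintype.card_fin]
      _ = 2 * k ^ 2 * aleph V := by ring
  -- numeric inequality
  have hk0 : (0:ℝ) ≤ (k:ℝ) := Nat.cast_nonneg k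
  have hfact : (k:ℝ) ≤ (Nat.factorial k : ℝ) := by
    exact_mod_cast Nat.self_le_factorial k
  have h4 : (4:ℝ) ≤ 2 ^ k := by
    calc (4:ℝ) = 2 ^ 2 := by norm_num
      _ ≤ 2 ^ k := pow_le_pow_right₀ one_le_two hk
  have hpowk : (k:ℝ) + 2 ≤ 2 ^ k := by
    have h := nat_add_two_le_two_pow k hk
    have h' := (Nat.cast_le (α := ℝ)).mpr h
    push_cast at h'
    linarith
  have h1 : (4:ℝ) * k ≤ 2 ^ k * (Nat.factorial k : ℝ) :=
    mul_le_mul h4 hfact hk0 (by positivity)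
  have h2 : ((k:ℝ) + 1) ^ 2 ≤ ((2:ℝ) ^ k - 1) ^ 2 :=
    pow_le_pow_left₀ (by positivity) (by linarith) 2
  have hnum : (8:ℝ) * (k:ℝ) ^ 2
      ≤ 2 ^ k * (Nat.factorial k : ℝ) * ((2:ℝ) ^ k - 1) ^ 2 := by
    have h3 : ((4:ℝ) * k) * (((k:ℝ) + 1) ^ 2)
        ≤ (2 ^ k * (Nat.factorial k : ℝ)) * (((2:ℝ) ^ k - 1) ^ 2) :=
      mul_le_mul h1 h2 (by positivity) (by positivity)
    nlinarith [mul_nonneg hk0 (mul_nonneg hk0 hk0)]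
  have hn0 : (0:ℝ) < (V.card : ℝ) := by
    exact_mod_cast Finset.card_pos.mpr hVne
  have hqq0 : (0:ℝ) ≤ 4 * (qmax ^ k * qmax ^ k) :=
    mul_nonneg (by norm_num) (mul_nonneg (pow_nonneg hq0 k) (pow_nonneg hq0 k))
  -- rewrite the integrand pointwise
  have hrw : ∀ ω : Ω, ((V.card : ℝ)⁻¹ * (∑ v ∈ V, ∏ ℓ,
        (Y (v ℓ).1 (v ℓ).2 ω - α) ^ τ ℓ *
          (1 - β - Y (v ℓ).1 (v ℓ).2 ω) ^ (1 - τ ℓ)) - T)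
      = (V.card : ℝ)⁻¹ * ∑ v ∈ V, Z v ω := by
    intro ω
    rw [hT, ← mul_sub, ← Finset.sum_sub_distrib]
  have e1 : ∀ ω : Ω, ((V.card : ℝ)⁻¹ * (∑ v ∈ V, ∏ ℓ,
        (Y (v ℓ).1 (v ℓ).2 ω - α) ^ τ ℓ *
          (1 - β - Y (v ℓ).1 (v ℓ).2 ω) ^ (1 - τ ℓ)) - T) ^ 2
      = ((V.card : ℝ)⁻¹) ^ 2 * ∑ v ∈ V, ∑ v' ∈ V, Z v ω * Z v' ω := by
    intro ω
    rw [hrw ω, mul_pow, pow_two (∑ v ∈ V, Z v ω), Finset.sum_mul_sum]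
  have hmain : ∫ ω, ((V.card : ℝ)⁻¹ * (∑ v ∈ V, ∏ ℓ,
          (Y (v ℓ).1 (v ℓ).2 ω - α) ^ τ ℓ *
            (1 - β - Y (v ℓ).1 (v ℓ).2 ω) ^ (1 - τ ℓ)) - T) ^ 2 ∂μ
      = ((V.card : ℝ)⁻¹) ^ 2 * ∑ v ∈ V, ∑ v' ∈ V, ∫ ω, Z v ω * Z v' ω ∂μ := by
    simp only [e1]
    rw [MeasureTheory.integral_const_mul]
    congr 1
    rw [integral_finset_sum _ (fun v _ => integrable_finset_sum _ fun v' _ => hZZint v v')]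
    exact Finset.sum_congr rfl fun v _ => integral_finset_sum _ fun v' _ => hZZint v v'
  -- bound the double sum
  have hinner : ∀ v ∈ V, ∑ v' ∈ V, ∫ ω, Z v ω * Z v' ω ∂μ
      ≤ ((2 * k ^ 2 * aleph V : ℕ) : ℝ) * (4 * (qmax ^ k * qmax ^ k)) := by
    intro v hv
    rw [← Finset.sum_filter_add_sum_filter_not V
      (fun v' => ∃ ℓ' ℓ : Fin k, ed v' ℓ' = ed v ℓ)
      (fun v' => ∫ ω, Z v ω * Z v' ω ∂μ)]
    have hzero : ∑ v' ∈ V.filter (fun v' => ¬ ∃ ℓ' ℓ : Fin k, ed v' ℓ' = ed v ℓ),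
        ∫ ω, Z v ω * Z v' ω ∂μ = 0 := by
      refine Finset.sum_eq_zero fun v' hv' => ?_
      rw [Finset.mem_filter] at hv'
      exact hcov0 v hv v' hv'.1 (fun ℓ' ℓ h => hv'.2 ⟨ℓ', ℓ, h⟩)
    rw [hzero, add_zero]
    calc ∑ v' ∈ V.filter (fun v' => ∃ ℓ' ℓ : Fin k, ed v' ℓ' = ed v ℓ),
          ∫ ω, Z v ω * Z v' ω ∂μ
        ≤ (V.filter (fun v' => ∃ ℓ' ℓ : Fin k, ed v' ℓ' = ed v ℓ)).card
            • (4 * (qmax ^ k * qmax ^ k)) :=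
          Finset.sum_le_card_nsmul _ _ _ (fun v' _ => hZZb v v')
      _ = ((V.filter (fun v' => ∃ ℓ' ℓ : Fin k, ed v' ℓ' = ed v ℓ)).card : ℝ)
            * (4 * (qmax ^ k * qmax ^ k)) := nsmul_eq_mul _ _
      _ ≤ ((2 * k ^ 2 * aleph V : ℕ) : ℝ) * (4 * (qmax ^ k * qmax ^ k)) := by
          apply mul_le_mul_of_nonneg_right _ hqq0
          exact_mod_cast hNcount v hv
  have hdouble : ∑ v ∈ V, ∑ v' ∈ V, ∫ ω, Z v ω * Z v' ω ∂μ
      ≤ (V.card : ℝ) * (((2 * k ^ 2 * aleph V : ℕ) : ℝ) * (4 * (qmax ^ k * qmax ^ k))) := by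
    calc ∑ v ∈ V, ∑ v' ∈ V, ∫ ω, Z v ω * Z v' ω ∂μ
        ≤ ∑ _v ∈ V, ((2 * k ^ 2 * aleph V : ℕ) : ℝ) * (4 * (qmax ^ k * qmax ^ k)) :=
          Finset.sum_le_sum hinner
      _ = (V.card : ℝ) * (((2 * k ^ 2 * aleph V : ℕ) : ℝ) * (4 * (qmax ^ k * qmax ^ k))) := by
          rw [Finset.sum_const, nsmul_eq_mul]
  rw [hmain]
  refine le_trans (mul_le_mul_of_nonneg_left hdouble (by positivity)) ?_
  have hid : ((V.card : ℝ)⁻¹) ^ 2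
        * ((V.card : ℝ) * (((2 * k ^ 2 * aleph V : ℕ) : ℝ) * (4 * (qmax ^ k * qmax ^ k))))
      = (((2 * k ^ 2 * aleph V : ℕ) : ℝ) * (4 * (qmax ^ k * qmax ^ k))) / (V.card : ℝ) := by
    field_simp
  rw [hid]
  rw [div_le_div_iff_of_pos_right hn0]
  have hq2k : qmax ^ (2 * k) = qmax ^ k * qmax ^ k := by rw [two_mul, pow_add]
  rw [hq2k]
  push_cast
  nlinarith [mul_le_mul_of_nonneg_right hnum
    (mul_nonneg (mul_nonneg (pow_nonneg hq0 k) (pow_nonneg hq0 k))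
      (Nat.cast_nonneg (aleph V) : (0:ℝ) ≤ (aleph V : ℝ)))]
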